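/- arXiv:1703.10460 — 3 statements merged into one kernel-verified Lean document; each statement's English description precedes it below -/
import Mathlib

section
/- Two finite dimensional vector spaces V and W over the same finite field F are isomorphic as vector spaces if and only if their linear dependence graphs Γ(V) and Γ(W) are isomorphic as graphs. -/
/-- The linear dependence graph of a vector space `V` over a field `F`:
two distinct vectors are adjacent iff they are linearly dependent. -/
def depGraph (F V : Type*) [Field F] [AddCommGroup V] [Module F V] : SimpleGraph V where
  Adj a b := a ≠ b ∧ ∃ c : F, b = c • a ∨ a = c • b
  symm := by
    constructor
    rintro a b ⟨hne, c, h | h⟩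
    · exact ⟨hne.symm, c, Or.inr h⟩
    · exact ⟨hne.symm, c, Or.inl h⟩
  loopless := by constructor; rintro a ⟨h, _⟩; exact h rfl

theorem stmt6 (F V W : Type*) [Field F] [Fintype F]
    [AddCommGroup V] [Module F V] [FiniteDimensional F V]
    [AddCommGroup W] [Module F W] [FiniteDimensional F W] :
    Nonempty (V ≃ₗ[F] W) ↔ Nonempty (depGraph F V ≃g depGraph F W) := by
  constructor
  · rintro ⟨e⟩
    refine ⟨⟨e.toEquiv, ?_⟩⟩
    intro a b
    show ((depGraph F W).Adj (e a) (e b)) ↔ (depGraph F V).Adj a b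
    constructor
    · rintro ⟨hne, c, h | h⟩
      · exact ⟨fun h' => hne (congrArg e h'), c,
          Or.inl (e.injective (by rw [map_smul]; exact h))⟩
      · exact ⟨fun h' => hne (congrArg e h'), c,
          Or.inr (e.injective (by rw [map_smul]; exact h))⟩
    · rintro ⟨hne, c, h | h⟩
      · exact ⟨fun h' => hne (e.injective h'), c, Or.inl (by rw [h, map_smul])⟩
      · exact ⟨fun h' => hne (e.injective h'), c, Or.inr (by rw [h, map_smul])⟩
  · rintro ⟨g⟩
    have : Finite V := Module.finite_of_finite F
    have : Finite W := Module.finite_of_finite F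
    cases nonempty_fintype V
    cases nonempty_fintype W
    have hV : Fintype.card V = Fintype.card F ^ Module.finrank F V := Module.card_eq_pow_finrank
    have hW : Fintype.card W = Fintype.card F ^ Module.finrank F W := Module.card_eq_pow_finrank
    have hcard : Fintype.card V = Fintype.card W := Fintype.card_congr g.toEquiv
    rw [hV, hW] at hcard
    have hq : 1 < Fintype.card F := Fintype.one_lt_card
    have : Module.finrank F V = Module.finrank F W :=
      Nat.pow_right_injective hq hcard
    exact FiniteDimensional.nonempty_linearEquiv_of_finrank_eq this
end

section
/- The algebraic connectivity (second smallest Laplacian eigenvalue) of Γ(V) is 1, provided dim(V) ≥ 2. -/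
open Finset Matrix SimpleGraph

section aux
variable {F V : Type*} [Field F] [AddCommGroup V] [Module F V]

lemma depGraph_adj_iff {w u : V} (hw : w ≠ 0) :
    (depGraph F V).Adj w u ↔ u ≠ w ∧ ∃ c : F, u = c • w := by
  constructor
  · rintro ⟨hne, c, h | h⟩
    · exact ⟨hne.symm, c, h⟩
    · rcases eq_or_ne c 0 with rfl | hc
      · rw [zero_smul] at h; exact absurd h hw
      · exact ⟨hne.symm, c⁻¹, by rw [h, smul_smul, inv_mul_cancel₀ hc, one_smul]⟩
  · rintro ⟨hne, c, rfl⟩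
    exact ⟨hne.symm, c, Or.inl rfl⟩

lemma depGraph_adj_zero {u : V} : (depGraph F V).Adj (0 : V) u ↔ u ≠ 0 := by
  constructor
  · rintro ⟨hne, -⟩; exact fun h => hne h.symm
  · intro h; exact ⟨fun h' => h h'.symm, 0, Or.inr (zero_smul F u).symm⟩

end aux

lemma mem_spectrum_iff_exists {n : Type*} [Fintype n] [DecidableEq n] {M : Matrix n n ℝ} {x : ℝ} :
    x ∈ spectrum ℝ M ↔ ∃ v : n → ℝ, v ≠ 0 ∧ M *ᵥ v = x • v := by
  rw [spectrum.mem_iff, Matrix.isUnit_iff_isUnit_det, isUnit_iff_ne_zero, not_not,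
      ← Matrix.exists_mulVec_eq_zero_iff]
  have key : ∀ v : n → ℝ, (algebraMap ℝ (Matrix n n ℝ) x - M) *ᵥ v = x • v - M *ᵥ v := by
    intro v
    rw [Matrix.sub_mulVec, Algebra.algebraMap_eq_smul_one, Matrix.smul_mulVec,
      Matrix.one_mulVec]
  simp_rw [key, sub_eq_zero, eq_comm]

lemma lap_mulVec {W : Type*} [Fintype W] [DecidableEq W] (G : SimpleGraph W) [DecidableRel G.Adj]
    (f : W → ℝ) (w : W) :
    (G.lapMatrix ℝ *ᵥ f) w = ∑ u ∈ G.neighborFinset w, (f w - f u) := by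
  rw [SimpleGraph.lapMatrix_mulVec_apply, Finset.sum_sub_distrib]
  congr 1
  rw [Finset.sum_const, nsmul_eq_mul]
  rfl
lemma lap_lower_bound {W : Type*} [Fintype W] [DecidableEq W] (G : SimpleGraph W)
    [DecidableRel G.Adj] (w₀ : W) (huniv : ∀ u : W, u ≠ w₀ → G.Adj w₀ u)
    {x : ℝ} {v : W → ℝ} (hv : v ≠ 0) (hMv : G.lapMatrix ℝ *ᵥ v = x • v) (hx0 : x ≠ 0) :
    1 ≤ x := by
  set L := G.lapMatrix ℝ with hL
  -- column sums are zero
  have hrow : ∀ u : W, ∑ z : W, L u z = 0 := by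
    intro u
    have := congrFun (G.lapMatrix_mulVec_const_eq_zero (R := ℝ)) u
    simpa [Matrix.mulVec, dotProduct] using this
  have hcol : ∀ u : W, ∑ z : W, L z u = 0 := by
    intro u
    have hs : Lᵀ = L := G.isSymm_lapMatrix (R := ℝ)
    calc ∑ z : W, L z u = ∑ z : W, L u z := by
          refine Finset.sum_congr rfl fun z _ => ?_
          rw [← Matrix.transpose_apply L z u, hs]
      _ = 0 := hrow u
  -- sum of v is zero
  have hsumv : ∑ w : W, v w = 0 := by
    have h1 : ∑ w : W, (L *ᵥ v) w = 0 := by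
      simp only [Matrix.mulVec, dotProduct]
      rw [Finset.sum_comm]
      refine Finset.sum_eq_zero fun u _ => ?_
      rw [← Finset.sum_mul, hcol, zero_mul]
    have h2 : ∑ w : W, (L *ᵥ v) w = x * ∑ w : W, v w := by
      rw [hMv, Finset.mul_sum]; rfl
    have := h1 ▸ h2
    exact (mul_eq_zero.mp this.symm).resolve_left hx0
  -- quadratic form
  have hq : x * ∑ w : W, v w ^ 2 =
      (∑ i : W, ∑ j : W, if G.Adj i j then (v i - v j) ^ 2 else 0) / 2 := by
    have h := G.lapMatrix_toLinearMap₂' (R := ℝ) v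
    rw [Matrix.toLinearMap₂'_apply'] at h
    rw [← h, hMv]
    simp only [dotProduct, Pi.smul_apply, smul_eq_mul]
    rw [Finset.mul_sum]
    exact Finset.sum_congr rfl fun w _ => by ring
  set S := ∑ j : W, (v w₀ - v j) ^ 2 with hS
  have hQ1 : ∑ j : W, (if G.Adj w₀ j then (v w₀ - v j) ^ 2 else 0) = S := by
    refine Finset.sum_congr rfl fun j _ => ?_
    by_cases hj : j = w₀
    · subst hj; simp
    · rw [if_pos (huniv j hj)]
  have hQ2 : 2 * S ≤ ∑ i : W, ∑ j : W, if G.Adj i j then (v i - v j) ^ 2 else 0 := by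
    have hsplit : ∑ i : W, ∑ j : W, (if G.Adj i j then (v i - v j) ^ 2 else 0) =
        (∑ j : W, if G.Adj w₀ j then (v w₀ - v j) ^ 2 else 0) +
        ∑ i ∈ Finset.univ.erase w₀, ∑ j : W, (if G.Adj i j then (v i - v j) ^ 2 else 0) :=
      (Finset.add_sum_erase _ _ (Finset.mem_univ w₀)).symm
    have hterm : ∀ i ∈ Finset.univ.erase w₀,
        (v i - v w₀) ^ 2 ≤ ∑ j : W, (if G.Adj i j then (v i - v j) ^ 2 else 0) := by
      intro i hi
      have hadj : G.Adj i w₀ := (huniv i (Finset.mem_erase.mp hi).1).symm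
      calc (v i - v w₀) ^ 2 = if G.Adj i w₀ then (v i - v w₀) ^ 2 else 0 := by rw [if_pos hadj]
        _ ≤ _ := Finset.single_le_sum (f := fun j => if G.Adj i j then (v i - v j) ^ 2 else 0)
            (fun j _ => by split <;> positivity) (Finset.mem_univ w₀)
    have h2 : ∑ i ∈ Finset.univ.erase w₀, (v i - v w₀) ^ 2 = S := by
      rw [Finset.sum_erase_eq_sub (Finset.mem_univ w₀),
        show (v w₀ - v w₀ : ℝ) ^ 2 = 0 by ring, sub_zero, hS]
      exact Finset.sum_congr rfl fun i _ => by ring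
    calc 2 * S = S + S := by ring
      _ ≤ _ := by
          rw [hsplit, hQ1]
          gcongr
          rw [← h2]
          exact Finset.sum_le_sum hterm
  have hSge : (∑ w : W, v w ^ 2) ≤ S := by
    have hexp : S = (Fintype.card W : ℝ) * (v w₀) ^ 2 + ∑ w : W, v w ^ 2 := by
      rw [hS]
      have : ∀ j : W, (v w₀ - v j) ^ 2 = (v w₀) ^ 2 - 2 * v w₀ * v j + (v j) ^ 2 := fun j => by
        ring
      simp_rw [this]
      rw [Finset.sum_add_distrib, Finset.sum_sub_distrib, Finset.sum_const, ← Finset.mul_sum,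
        hsumv, mul_zero, sub_zero, nsmul_eq_mul, Fintype.card]
    have : (0:ℝ) ≤ (Fintype.card W : ℝ) * (v w₀) ^ 2 := by positivity
    linarith
  have hv2pos : 0 < ∑ w : W, v w ^ 2 := by
    obtain ⟨w, hw⟩ : ∃ w, v w ≠ 0 := by
      by_contra h; push_neg at h; exact hv (funext h)
    have h1 : (0:ℝ) < v w ^ 2 := by positivity
    exact lt_of_lt_of_le h1 (Finset.single_le_sum (f := fun i => v i ^ 2)
      (fun i _ => sq_nonneg _) (Finset.mem_univ w))
  have : 1 * (∑ w : W, v w ^ 2) ≤ x * (∑ w : W, v w ^ 2) := by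
    rw [one_mul, hq]; linarith
  exact le_of_mul_le_mul_right this hv2pos

theorem stmt16 (F V : Type*) [Field F] [Fintype F] [AddCommGroup V] [Module F V]
    [Fintype V] [DecidableEq V] [DecidableRel (depGraph F V).Adj]
    (hn : 2 ≤ Module.finrank F V) :
    sInf {x : ℝ | x ∈ spectrum ℝ ((depGraph F V).lapMatrix ℝ) ∧ x ≠ 0} = 1 := by
  classical
  have hub : ∀ x ∈ {x : ℝ | x ∈ spectrum ℝ ((depGraph F V).lapMatrix ℝ) ∧ x ≠ 0}, (1:ℝ) ≤ x := by
    rintro x ⟨hx, hx0⟩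
    obtain ⟨v, hv, hMv⟩ := mem_spectrum_iff_exists.mp hx
    exact lap_lower_bound (depGraph F V) 0 (fun u hu => depGraph_adj_zero.mpr hu) hv hMv hx0
  have hmem : (1:ℝ) ∈ {x : ℝ | x ∈ spectrum ℝ ((depGraph F V).lapMatrix ℝ) ∧ x ≠ 0} := by
    refine ⟨?_, one_ne_zero⟩
    rw [mem_spectrum_iff_exists]
    have hnt : Nontrivial V := Module.nontrivial_of_finrank_pos (R := F) (by omega)
    obtain ⟨a, ha⟩ := exists_ne (0 : V)
    obtain ⟨b, hab⟩ := exists_linearIndependent_pair_of_one_lt_finrank (R := F)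
      (show 1 < Module.finrank F V by omega) ha
    have hpair : ∀ s t : F, s • a + t • b = 0 → s = 0 ∧ t = 0 :=
      LinearIndependent.pair_iff.mp hab
    have hb : b ≠ 0 := by
      intro h
      have := hpair 0 1 (by simp [h])
      exact one_ne_zero this.2
    have hdisj : ∀ c d : F, c ≠ 0 → c • a ≠ d • b := by
      intro c d hc h
      have := hpair c (-d) (by rw [neg_smul, h]; abel)
      exact hc this.1
    set PA : V → Prop := fun w => ∃ c : F, c ≠ 0 ∧ w = c • a with hPAdef
    set PB : V → Prop := fun w => ∃ c : F, c ≠ 0 ∧ w = c • b with hPBdef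
    set va : V → ℝ := fun w => (if PA w then 1 else 0) - (if PB w then 1 else 0) with hvadef
    have hPA_ne0 : ∀ w, PA w → w ≠ 0 := by
      rintro w ⟨c, hc, rfl⟩; exact smul_ne_zero hc ha
    have hPB_ne0 : ∀ w, PB w → w ≠ 0 := by
      rintro w ⟨c, hc, rfl⟩; exact smul_ne_zero hc hb
    have hnotboth : ∀ w, PA w → ¬ PB w := by
      rintro w ⟨c, hc, rfl⟩ ⟨d, hd, h⟩; exact hdisj c d hc h
    have vaA : ∀ w, PA w → va w = 1 := by
      intro w h
      rw [hvadef]; dsimp only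
      rw [if_pos h, if_neg (hnotboth w h)]; ring
    have vaB : ∀ w, PB w → va w = -1 := by
      intro w h
      rw [hvadef]; dsimp only
      rw [if_pos h, if_neg (fun h' => hnotboth w h' h)]; ring
    have va0' : ∀ w, ¬ PA w → ¬ PB w → va w = 0 := by
      intro w h1 h2
      rw [hvadef]; dsimp only
      rw [if_neg h1, if_neg h2]; ring
    have va0 : va 0 = 0 := by
      refine va0' 0 ?_ ?_
      · rintro ⟨c, hc, h⟩
        exact ha ((smul_eq_zero.mp h.symm).resolve_left hc)
      · rintro ⟨c, hc, h⟩
        exact hb ((smul_eq_zero.mp h.symm).resolve_left hc)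
    have hclA : ∀ (e : F) (w : V), e ≠ 0 → PA w → PA (e • w) := by
      rintro e w he ⟨c, hc, rfl⟩
      exact ⟨e * c, mul_ne_zero he hc, smul_smul e c a⟩
    have hclB : ∀ (e : F) (w : V), e ≠ 0 → PB w → PB (e • w) := by
      rintro e w he ⟨c, hc, rfl⟩
      exact ⟨e * c, mul_ne_zero he hc, smul_smul e c b⟩
    refine ⟨va, ?_, ?_⟩
    · intro h
      have h1 : va a = 1 := vaA a ⟨1, one_ne_zero, (one_smul F a).symm⟩
      rw [congrFun h a] at h1
      exact one_ne_zero h1.symm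
    · refine funext fun w => ?_
      rw [lap_mulVec, Pi.smul_apply, smul_eq_mul, one_mul]
      by_cases hwa : PA w
      · have hw0 : w ≠ 0 := hPA_ne0 w hwa
        have hterm : ∀ u ∈ (depGraph F V).neighborFinset w,
            va w - va u = if u = 0 then 1 else 0 := by
          intro u hu
          rw [SimpleGraph.mem_neighborFinset, depGraph_adj_iff hw0] at hu
          obtain ⟨hne, e, rfl⟩ := hu
          by_cases he : e = 0
          · subst he
            rw [zero_smul, if_pos rfl, va0, vaA w hwa]; ring
          · have hu' : PA (e • w) := hclA e w he hwa
            rw [vaA _ hu', vaA _ hwa, if_neg (hPA_ne0 _ hu'), sub_self]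
        rw [Finset.sum_congr rfl hterm,
          Finset.sum_ite_eq' ((depGraph F V).neighborFinset w) 0 (fun _ => (1:ℝ))]
        have h0mem : (0 : V) ∈ (depGraph F V).neighborFinset w := by
          rw [SimpleGraph.mem_neighborFinset, depGraph_adj_iff hw0]
          exact ⟨fun h => hw0 h.symm, 0, (zero_smul F w).symm⟩
        rw [if_pos h0mem, vaA w hwa]
      · by_cases hwb : PB w
        · have hw0 : w ≠ 0 := hPB_ne0 w hwb
          have hterm : ∀ u ∈ (depGraph F V).neighborFinset w,
              va w - va u = if u = 0 then (-1:ℝ) else 0 := by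
            intro u hu
            rw [SimpleGraph.mem_neighborFinset, depGraph_adj_iff hw0] at hu
            obtain ⟨hne, e, rfl⟩ := hu
            by_cases he : e = 0
            · subst he
              rw [zero_smul, if_pos rfl, va0, vaB w hwb]; ring
            · have hu' : PB (e • w) := hclB e w he hwb
              rw [vaB _ hu', vaB _ hwb, if_neg (hPB_ne0 _ hu'), sub_self]
          rw [Finset.sum_congr rfl hterm,
            Finset.sum_ite_eq' ((depGraph F V).neighborFinset w) 0 (fun _ => (-1:ℝ))]
          have h0mem : (0 : V) ∈ (depGraph F V).neighborFinset w := by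
            rw [SimpleGraph.mem_neighborFinset, depGraph_adj_iff hw0]
            exact ⟨fun h => hw0 h.symm, 0, (zero_smul F w).symm⟩
          rw [if_pos h0mem, vaB w hwb]
        · by_cases hw0 : w = 0
          · subst hw0
            -- sum over neighbors of 0
            have hN0 : (depGraph F V).neighborFinset 0 = Finset.univ.erase 0 := by
              ext u
              rw [SimpleGraph.mem_neighborFinset, depGraph_adj_zero, Finset.mem_erase]
              simp
            have hcardA : (Finset.univ.filter (fun x => PA x)).card =
                (Finset.univ.filter (fun c : F => c ≠ 0)).card := by
              refine (Finset.card_bij (fun c _ => c • a) ?_ ?_ ?_).symm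
              · intro c hc
                rw [Finset.mem_filter] at hc ⊢
                exact ⟨Finset.mem_univ _, c, hc.2, rfl⟩
              · intro c _ d _ h
                exact smul_left_injective F ha h
              · intro u hu
                have hu' : PA u := (Finset.mem_filter.mp hu).2
                obtain ⟨c, hc, rfl⟩ := hu'
                exact ⟨c, Finset.mem_filter.mpr ⟨Finset.mem_univ _, hc⟩, rfl⟩
            have hcardB : (Finset.univ.filter (fun x => PB x)).card =
                (Finset.univ.filter (fun c : F => c ≠ 0)).card := by
              refine (Finset.card_bij (fun c _ => c • b) ?_ ?_ ?_).symm
              · intro c hc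
                rw [Finset.mem_filter] at hc ⊢
                exact ⟨Finset.mem_univ _, c, hc.2, rfl⟩
              · intro c _ d _ h
                exact smul_left_injective F hb h
              · intro u hu
                have hu' : PB u := (Finset.mem_filter.mp hu).2
                obtain ⟨c, hc, rfl⟩ := hu'
                exact ⟨c, Finset.mem_filter.mpr ⟨Finset.mem_univ _, hc⟩, rfl⟩
            have hsum : ∑ u : V, va u = 0 := by
              rw [hvadef]
              rw [Finset.sum_sub_distrib, Finset.sum_boole, Finset.sum_boole, sub_eq_zero,
                hcardA, hcardB]
            have : ∑ u ∈ (depGraph F V).neighborFinset 0, (va 0 - va u) =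
                - ∑ u ∈ Finset.univ.erase 0, va u := by
              rw [hN0, va0]
              rw [← Finset.sum_neg_distrib]
              exact Finset.sum_congr rfl fun u _ => by ring
            rw [this, Finset.sum_erase_eq_sub (Finset.mem_univ 0), hsum, va0]
            ring
          · have hvw : va w = 0 := va0' w hwa hwb
            have hterm : ∀ u ∈ (depGraph F V).neighborFinset w, va w - va u = 0 := by
              intro u hu
              rw [SimpleGraph.mem_neighborFinset, depGraph_adj_iff hw0] at hu
              obtain ⟨hne, e, rfl⟩ := hu
              by_cases he : e = 0
              · subst he; rw [zero_smul, va0, hvw, sub_zero]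
              · have hA : ¬ PA (e • w) := by
                  intro h
                  exact hwa (by
                    have := hclA e⁻¹ (e • w) (inv_ne_zero he) h
                    rwa [smul_smul, inv_mul_cancel₀ he, one_smul] at this)
                have hB : ¬ PB (e • w) := by
                  intro h
                  exact hwb (by
                    have := hclB e⁻¹ (e • w) (inv_ne_zero he) h
                    rwa [smul_smul, inv_mul_cancel₀ he, one_smul] at this)
                rw [va0' _ hA hB, hvw, sub_zero]
            rw [Finset.sum_eq_zero hterm, hvw]
  exact le_antisymm (csInf_le ⟨1, hub⟩ hmem) (le_csInf ⟨1, hmem⟩ hub)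
end

section
/- The characteristic polynomial of the distance matrix of Γ(V) is [x² − {2(q^n−1) − q}x − (q^n−1)] · (x + q)^{(q^n−1)/(q−1) − 1} · (x + 1)^{(q−2)(q^n−1)/(q−1)}, for dim(V) ≥ 2. -/
open Matrix Polynomial

set_option linter.unusedSectionVars false
set_option linter.unusedVariables false

namespace Stmt18Aux

variable {F V : Type*} [Field F] [Fintype F] [AddCommGroup V] [Module F V]
  [Fintype V] [DecidableEq V]

instance : Finite (Projectivization F V) := Quotient.finite _
noncomputable instance : Fintype (Projectivization F V) := Fintype.ofFinite _
noncomputable instance : DecidableEq (Projectivization F V) := Classical.decEq _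
noncomputable instance : DecidableEq F := Classical.decEq _

lemma adj_zero (v : V) (hv : v ≠ 0) : (depGraph F V).Adj v 0 :=
  ⟨hv, 0, Or.inl (zero_smul F v).symm⟩

open scoped Classical in
lemma dist_eq (a b : V) : (depGraph F V).dist a b =
    if a = b then 0 else if (depGraph F V).Adj a b then 1 else 2 := by
  split_ifs with h1 h2
  · subst h1; exact SimpleGraph.dist_self
  · exact SimpleGraph.dist_eq_one_iff_adj.2 h2
  · have ha : a ≠ 0 := by
      rintro rfl
      exact h2 ((adj_zero b (Ne.symm h1)).symm)
    have hb : b ≠ 0 := by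
      rintro rfl
      exact h2 (adj_zero a h1)
    let w : (depGraph F V).Walk a b :=
      SimpleGraph.Walk.cons (adj_zero a ha)
        (SimpleGraph.Walk.cons ((adj_zero b hb).symm) SimpleGraph.Walk.nil)
    have hle : (depGraph F V).dist a b ≤ 2 := by
      have h := SimpleGraph.dist_le w
      simp only [w, SimpleGraph.Walk.length_cons, SimpleGraph.Walk.length_nil] at h
      exact h
    have hne0 : (depGraph F V).dist a b ≠ 0 := by
      intro h
      exact h1 ((SimpleGraph.Reachable.dist_eq_zero_iff ⟨w⟩).1 h)
    have hne1 : (depGraph F V).dist a b ≠ 1 := by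
      intro h
      exact h2 (SimpleGraph.dist_eq_one_iff_adj.1 h)
    omega

variable (F)

lemma mk_smul_eq (c : F) (hc : c ≠ 0) (L : Projectivization F V)
    (h : c • L.rep ≠ 0) : Projectivization.mk F (c • L.rep) h = L := by
  conv_rhs => rw [← Projectivization.mk_rep L]
  rw [Projectivization.mk_eq_mk_iff']
  exact ⟨c, rfl⟩

lemma smul_rep_ne_zero (c : Fˣ) (L : Projectivization F V) : (c : F) • L.rep ≠ 0 := by
  simp [smul_eq_zero, Units.ne_zero, Projectivization.rep_nonzero]

lemma line_eq_of_smul_eq {a b : F} (ha : a ≠ 0) (hb : b ≠ 0) {L L' : Projectivization F V}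
    (h : a • L.rep = b • L'.rep) : L = L' := by
  have hA : a • L.rep ≠ 0 := by simp [smul_eq_zero, ha, Projectivization.rep_nonzero]
  have hB : b • L'.rep ≠ 0 := by simp [smul_eq_zero, hb, Projectivization.rep_nonzero]
  have h1 : Projectivization.mk F (a • L.rep) hA = L := mk_smul_eq F a ha L _
  have h2 : Projectivization.mk F (b • L'.rep) hB = L' := mk_smul_eq F b hb L' _
  have h3 : Projectivization.mk F (a • L.rep) hA = Projectivization.mk F (b • L'.rep) hB := by
    rw [Projectivization.mk_eq_mk_iff']
    exact ⟨1, by simp [h]⟩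
  rwa [h1, h2] at h3

variable (V)

/-- The reindexing equivalence. -/
noncomputable def e : (Unit ⊕ (Fˣ × Projectivization F V)) ≃ V :=
  Equiv.ofBijective (Sum.elim (fun _ => (0 : V)) (fun p => ((p.1 : F) • p.2.rep : V)))
    (by
      constructor
      · rintro (⟨⟩ | ⟨c, L⟩) (⟨⟩ | ⟨c', L'⟩) h
        · rfl
        · exfalso
          simp only [Sum.elim_inl, Sum.elim_inr] at h
          rcases (smul_eq_zero.1 h.symm) with h' | h'
          · exact Units.ne_zero c' h'
          · exact L'.rep_nonzero h'
        · exfalso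
          simp only [Sum.elim_inl, Sum.elim_inr] at h
          rcases (smul_eq_zero.1 h) with h' | h'
          · exact Units.ne_zero c h'
          · exact L.rep_nonzero h'
        · simp only [Sum.elim_inr] at h
          have hcL : (c : F) • L.rep ≠ 0 := by
            simp [smul_eq_zero, Units.ne_zero c, L.rep_nonzero]
          have hcL' : (c' : F) • L'.rep ≠ 0 := by
            simp [smul_eq_zero, Units.ne_zero c', L'.rep_nonzero]
          have hLL : L = L' := by
            rw [← mk_smul_eq F (c : F) (Units.ne_zero c) L hcL,
              ← mk_smul_eq F (c' : F) (Units.ne_zero c') L' hcL',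
              Projectivization.mk_eq_mk_iff']
            exact ⟨1, by simpa using h.symm⟩
          subst hLL
          have hcc : c = c' := Units.ext (smul_left_injective F L.rep_nonzero h)
          rw [hcc]
      · intro v
        by_cases hv : v = 0
        · exact ⟨Sum.inl (), hv.symm⟩
        · obtain ⟨a, ha⟩ := Projectivization.exists_smul_eq_mk_rep F v hv
          refine ⟨Sum.inr (a⁻¹, Projectivization.mk F v hv), ?_⟩
          simp only [Sum.elim_inr, ← ha, Units.smul_def, smul_smul]
          norm_num)


/-- all-ones matrix -/
def J (ι : Type*) : Matrix ι ι ℝ := Matrix.of fun _ _ => (1 : ℝ)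

/-- the nonzero-part block of the distance matrix -/
noncomputable def Mblk : Matrix (Fˣ × Projectivization F V) (Fˣ × Projectivization F V) ℝ :=
  (2 : ℝ) • J _ -
    Matrix.blockDiagonal (fun _ : Projectivization F V => (J Fˣ + 1))

/-- the full model distance matrix -/
noncomputable def Mfull : Matrix (Unit ⊕ (Fˣ × Projectivization F V))
    (Unit ⊕ (Fˣ × Projectivization F V)) ℝ :=
  Matrix.fromBlocks 0 (Matrix.of fun _ _ => 1) (Matrix.of fun _ _ => 1) (Mblk F V)

lemma Mblk_apply (p p' : Fˣ × Projectivization F V) :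
    Mblk F V p p' = if p.2 = p'.2 then (if p.1 = p'.1 then 0 else 1) else 2 := by
  obtain ⟨c, L⟩ := p; obtain ⟨c', L'⟩ := p'
  simp only [Mblk, J, Matrix.sub_apply, Matrix.smul_apply, Matrix.of_apply,
    Matrix.blockDiagonal_apply, Matrix.add_apply, Matrix.one_apply]
  by_cases h1 : L = L' <;> by_cases h2 : c = c' <;>
    simp [h1, h2, Prod.ext_iff] <;> norm_num

lemma reindex_eq :
    (Matrix.reindex (e F V).symm (e F V).symm
      (Matrix.of fun a b : V => ((depGraph F V).dist a b : ℝ))) = Mfull F V := by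
  ext i j
  have her : ∀ (c : Fˣ) (L : Projectivization F V),
      e F V (Sum.inr (c, L)) = (c : F) • L.rep := fun _ _ => rfl
  have he0 : e F V (Sum.inl ()) = (0 : V) := rfl
  have hinj := (e F V).injective
  rw [Matrix.reindex_apply, Matrix.submatrix_apply, Matrix.of_apply, dist_eq]
  simp only [Equiv.symm_symm]
  rcases i with ⟨⟨⟩⟩ | ⟨c, L⟩ <;> rcases j with ⟨⟨⟩⟩ | ⟨c', L'⟩
  · simp [Mfull]
  · simp only [he0, her]
    have hne : (0 : V) ≠ (c' : F) • L'.rep := (smul_rep_ne_zero F c' L').symm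
    have hadj : (depGraph F V).Adj (0 : V) ((c' : F) • L'.rep) :=
      (adj_zero _ (smul_rep_ne_zero F c' L')).symm
    have hne' : e F V (Sum.inl ()) ≠ e F V (Sum.inr (c', L')) := by
      simp only [he0, her]; exact hne
    have hadj' : (depGraph F V).Adj (e F V (Sum.inl ())) (e F V (Sum.inr (c', L'))) := by
      simp only [he0, her]; exact hadj
    simp [hne, hadj, hne', hadj', Mfull]
  · simp only [he0, her]
    have hne : (c : F) • L.rep ≠ (0 : V) := smul_rep_ne_zero F c L
    have hadj : (depGraph F V).Adj ((c : F) • L.rep) (0 : V) :=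
      adj_zero _ (smul_rep_ne_zero F c L)
    have hne' : e F V (Sum.inr (c, L)) ≠ e F V (Sum.inl ()) := by
      simp only [he0, her]; exact hne
    have hadj' : (depGraph F V).Adj (e F V (Sum.inr (c, L))) (e F V (Sum.inl ())) := by
      simp only [he0, her]; exact hadj
    simp [hne, hadj, hne', hadj', Mfull]
  · simp only [her]
    simp only [Mfull, Matrix.fromBlocks_apply₂₂, Mblk_apply]
    by_cases h1 : L = L'
    · subst h1
      by_cases h2 : c = c'
      · subst h2; simp
      · have hne : (c : F) • L.rep ≠ (c' : F) • L.rep := fun h =>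
          h2 (Units.ext (smul_left_injective F L.rep_nonzero h))
        have hadj : (depGraph F V).Adj ((c : F) • L.rep) ((c' : F) • L.rep) := by
          refine ⟨hne, ((c' * c⁻¹ : Fˣ) : F), Or.inl ?_⟩
          rw [← mul_smul]
          norm_num
        have hadj' : (depGraph F V).Adj (e F V (Sum.inr (c, L))) (e F V (Sum.inr (c', L))) := by
          simp only [her]; exact hadj
        simp [hne, hadj, hadj', h2]
    · have hne : (c : F) • L.rep ≠ (c' : F) • L'.rep := by
        intro h
        exact h1 (line_eq_of_smul_eq F (Units.ne_zero c) (Units.ne_zero c') h)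
      have hnadj : ¬ (depGraph F V).Adj ((c : F) • L.rep) ((c' : F) • L'.rep) := by
        rintro ⟨-, k, hk | hk⟩
        · have hk0 : k ≠ 0 := by
            rintro rfl; rw [zero_smul] at hk; exact smul_rep_ne_zero F c' L' hk
          exact h1 (line_eq_of_smul_eq F (mul_ne_zero hk0 (Units.ne_zero c)) (Units.ne_zero c')
            (by rw [mul_smul]; exact hk.symm))
        · have hk0 : k ≠ 0 := by
            rintro rfl; rw [zero_smul] at hk; exact smul_rep_ne_zero F c L hk
          exact h1 (line_eq_of_smul_eq F (Units.ne_zero c) (mul_ne_zero hk0 (Units.ne_zero c'))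
            (by rw [mul_smul]; exact hk))
      have hnadj' : ¬ (depGraph F V).Adj (e F V (Sum.inr (c, L))) (e F V (Sum.inr (c', L'))) := by
        simp only [her]; exact hnadj
      simp [hne, hnadj, hnadj', h1]

lemma eval_charpoly {ι : Type*} [Fintype ι] [DecidableEq ι] (A : Matrix ι ι ℝ) (x : ℝ) :
    (A.charpoly).eval x = (x • (1 : Matrix ι ι ℝ) - A).det := by
  rw [Matrix.charpoly, ← Polynomial.coe_evalRingHom, RingHom.map_det]
  congr 1
  ext i j
  by_cases h : i = j
  · subst h
    simp [Matrix.charmatrix_apply_eq, Matrix.one_apply_eq]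
  · simp [Matrix.charmatrix_apply_ne _ _ _ h, Matrix.one_apply_ne h]

lemma det_key (hq2 : 2 ≤ Fintype.card F) (hm1 : 1 ≤ Fintype.card (Projectivization F V))
    (x : ℝ) (hx0 : x ≠ 0) (hx1 : x + 1 ≠ 0) (hxq : x + (Fintype.card F : ℝ) ≠ 0) :
    (x • (1 : Matrix (Unit ⊕ (Fˣ × Projectivization F V))
        (Unit ⊕ (Fˣ × Projectivization F V)) ℝ) - Mfull F V).det =
      (x ^ 2 - (2 * ((Fintype.card Fˣ : ℝ) * (Fintype.card (Projectivization F V) : ℝ))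
          - (Fintype.card F : ℝ)) * x
        - (Fintype.card Fˣ : ℝ) * (Fintype.card (Projectivization F V) : ℝ)) *
      (x + (Fintype.card F : ℝ)) ^ (Fintype.card (Projectivization F V) - 1) *
      (x + 1) ^ ((Fintype.card F - 2) * Fintype.card (Projectivization F V)) := by
  classical
  set q : ℕ := Fintype.card F with hqdef
  set m : ℕ := Fintype.card (Projectivization F V) with hmdef
  set k : ℕ := Fintype.card Fˣ with hkdef
  have hk : k = q - 1 := Fintype.card_units F
  have hkR : (k : ℝ) = (q : ℝ) - 1 := by
    rw [hk]
    push_cast [Nat.cast_sub (by omega : 1 ≤ q)]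
    ring
  set ι := Fˣ × Projectivization F V with hidef
  set s : ℝ := (2 + x⁻¹) / (x + (q : ℝ)) with hsdef
  set E : Matrix ι ι ℝ :=
    (x + 1) • 1 + Matrix.blockDiagonal (fun _ : Projectivization F V => J Fˣ) with hEdef
  -- Step A : block decomposition
  have h1 : x • (1 : Matrix (Unit ⊕ ι) (Unit ⊕ ι) ℝ) - Mfull F V =
      Matrix.fromBlocks (x • 1) (Matrix.of fun _ _ => (-1 : ℝ))
        (Matrix.of fun _ _ => (-1 : ℝ)) (x • 1 - Mblk F V) := by
    ext i j
    rcases i with ⟨⟨⟩⟩ | p <;> rcases j with ⟨⟨⟩⟩ | p' <;>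
      simp [Mfull, Matrix.one_apply, Matrix.fromBlocks]
  -- Step B : Schur on the Unit block
  haveI : Invertible (x • (1 : Matrix Unit Unit ℝ)) := by
    apply Matrix.invertibleOfIsUnitDet
    simpa [Matrix.det_unique, Matrix.one_apply] using (isUnit_iff_ne_zero.2 hx0)
  rw [h1, Matrix.det_fromBlocks₁₁]
  have hdetA : (x • (1 : Matrix Unit Unit ℝ)).det = x := by
    simp [Matrix.det_unique, Matrix.one_apply]
  have hinv : (x • (1 : Matrix Unit Unit ℝ))⁻¹ = x⁻¹ • 1 := by
    apply Matrix.inv_eq_right_inv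
    rw [Matrix.smul_mul, Matrix.mul_smul, smul_smul, one_mul, mul_inv_cancel₀ hx0, one_smul]
  have hCB : (Matrix.of fun (_ : ι) (_ : Unit) => (-1 : ℝ)) * ⅟(x • (1 : Matrix Unit Unit ℝ)) *
      (Matrix.of fun (_ : Unit) (_ : ι) => (-1 : ℝ)) = x⁻¹ • J ι := by
    rw [Matrix.invOf_eq_nonsing_inv, hinv]
    ext p p'
    simp [Matrix.mul_apply, Matrix.one_apply, J]
  rw [hCB]
  -- Step C : factor the inner matrix
  have hE : (x • 1 - Mblk F V) - x⁻¹ • J ι = E - (2 + x⁻¹) • J ι := by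
    ext ⟨c, L⟩ ⟨c', L'⟩
    simp only [hEdef, Mblk, J, Matrix.sub_apply, Matrix.add_apply, Matrix.smul_apply,
      Matrix.of_apply, Matrix.blockDiagonal_apply, Matrix.one_apply, smul_eq_mul,
      Prod.mk.injEq]
    by_cases hL : L = L' <;> by_cases hc : c = c' <;>
      simp [hL, hc, Prod.ext_iff] <;> ring
  have hEJ : E * J ι = (x + (q : ℝ)) • J ι := by
    ext ⟨c, L⟩ ⟨c', L'⟩
    simp only [hEdef, Matrix.mul_apply, Matrix.add_apply, Matrix.smul_apply,
      Matrix.one_apply, Matrix.blockDiagonal_apply, J, Matrix.of_apply, smul_eq_mul]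
    rw [Finset.sum_congr rfl (fun p _ => by rw [mul_one])]
    rw [Finset.sum_add_distrib]
    have hs1 : (∑ p : ι, (x + 1) * (if (c, L) = p then (1:ℝ) else 0)) = x + 1 := by
      rw [Finset.sum_congr rfl (fun p _ => (mul_ite _ _ _ _ : _ = _)), mul_one, mul_zero]
      rw [Finset.sum_eq_single (c, L) (by intro b _ hb; simp [Ne.symm hb]) (by simp)]
      simp
    have hs2 : (∑ p : ι, (if L = p.2 then (1:ℝ) else 0)) = (k : ℝ) := by
      rw [Fintype.sum_prod_type]
      simp [Finset.sum_ite_eq, hkdef]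
    rw [hs1, hs2, mul_one, hkR]
    ring
  have hfact : E - (2 + x⁻¹) • J ι = E * ((1 : Matrix ι ι ℝ) - s • J ι) := by
    rw [Matrix.mul_sub, Matrix.mul_one, Matrix.mul_smul, hEJ, smul_smul, hsdef,
      div_mul_cancel₀ _ hxq]
  rw [hE, hfact, Matrix.det_mul]
  -- Step D : det of the rank-one part
  have hdet1 : ((1 : Matrix ι ι ℝ) - s • J ι).det = 1 - s * ((k : ℝ) * (m : ℝ)) := by
    have h1J : (1 : Matrix ι ι ℝ) - s • J ι =
        1 + Matrix.replicateCol Unit (fun _ => -s) * Matrix.replicateRow Unit (fun _ => (1 : ℝ)) := by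
      ext p p'
      simp [J, Matrix.mul_apply, Matrix.replicateCol, Matrix.replicateRow, sub_eq_add_neg]
    rw [h1J, Matrix.det_one_add_replicateCol_mul_replicateRow]
    have hci : Fintype.card ι = k * m := Fintype.card_prod _ _
    simp only [dotProduct, Finset.sum_const, Finset.card_univ, hci, nsmul_eq_mul,
      one_mul]
    push_cast
    ring
  -- Step E : det of E
  have hdetE : E.det = ((x + 1) ^ k * (1 + (k : ℝ) * (x + 1)⁻¹)) ^ m := by
    have hEblock : E = Matrix.blockDiagonal
        (fun _ : Projectivization F V => (x + 1) • 1 + J Fˣ) := by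
      ext ⟨c, L⟩ ⟨c', L'⟩
      simp only [hEdef, Matrix.add_apply, Matrix.smul_apply, Matrix.one_apply,
        Matrix.blockDiagonal_apply, J, Matrix.of_apply, smul_eq_mul, Prod.mk.injEq]
      by_cases hL : L = L' <;> by_cases hc : c = c' <;>
        simp [hL, hc, Prod.ext_iff]
    have hsmall : (x + 1) • (1 : Matrix Fˣ Fˣ ℝ) + J Fˣ =
        (x + 1) • ((1 : Matrix Fˣ Fˣ ℝ) +
          Matrix.replicateCol Unit (fun _ => (x + 1)⁻¹) * Matrix.replicateRow Unit (fun _ => (1 : ℝ))) := by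
      ext c c'
      simp only [Matrix.add_apply, Matrix.smul_apply, Matrix.one_apply, J, Matrix.of_apply,
        Matrix.mul_apply, Matrix.replicateCol_apply, Matrix.replicateRow_apply, smul_eq_mul]
      rw [Finset.sum_const]
      simp only [Finset.card_univ, Fintype.card_unit, one_smul]
      by_cases hc : c = c' <;> simp [hc] <;> field_simp
    rw [hEblock, Matrix.det_blockDiagonal, Finset.prod_const, Finset.card_univ, hsmall,
      Matrix.det_smul, Matrix.det_one_add_replicateCol_mul_replicateRow]
    simp only [dotProduct, Finset.sum_const, Finset.card_univ, nsmul_eq_mul, one_mul,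
      ← hkdef]
    rfl
  rw [hdetA, hdetE, hdet1]
  -- Step F : power bookkeeping
  have hpow : ((x + 1) ^ k * (1 + (k : ℝ) * (x + 1)⁻¹)) ^ m
      = (x + 1) ^ ((q - 2) * m) * ((x + (q : ℝ)) ^ (m - 1) * (x + (q : ℝ))) := by
    have hkk : k = (q - 2) + 1 := by omega
    have hxq' : (x + 1) * (1 + (k : ℝ) * (x + 1)⁻¹) = x + (q : ℝ) := by
      rw [mul_add, mul_one, mul_comm ((k : ℝ)) _, ← mul_assoc, mul_inv_cancel₀ hx1, one_mul,
        hkR]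
      ring
    calc ((x + 1) ^ k * (1 + (k : ℝ) * (x + 1)⁻¹)) ^ m
        = ((x + 1) ^ ((q - 2) : ℕ)) ^ m * ((x + 1) * (1 + (k : ℝ) * (x + 1)⁻¹)) ^ m := by
          rw [hkk, pow_succ, ← mul_pow]
          ring
      _ = (x + 1) ^ ((q - 2) * m) * ((x + (q : ℝ)) ^ (m - 1) * (x + (q : ℝ))) := by
          rw [hxq', ← pow_mul, ← pow_succ]
          congr 2
          omega
  rw [hpow, hsdef]
  field_simp
  ring

end Stmt18Aux

open Polynomial in
theorem stmt18 (F V : Type*) [Field F] [Fintype F] [AddCommGroup V] [Module F V]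
    [Fintype V] [DecidableEq V] (hn : 2 ≤ Module.finrank F V) :
    (Matrix.of fun a b : V => ((depGraph F V).dist a b : ℝ)).charpoly =
      (X ^ 2 - C (2 * ((Fintype.card F : ℝ) ^ Module.finrank F V - 1) - Fintype.card F) * X
          - C ((Fintype.card F : ℝ) ^ Module.finrank F V - 1)) *
        (X + C (Fintype.card F : ℝ)) ^
          ((Fintype.card F ^ Module.finrank F V - 1) / (Fintype.card F - 1) - 1) *
        (X + 1) ^
          ((Fintype.card F - 2) *
            ((Fintype.card F ^ Module.finrank F V - 1) / (Fintype.card F - 1))) := by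
  classical
  have hq2 : 2 ≤ Fintype.card F := Fintype.one_lt_card
  have hN : Fintype.card V = Fintype.card F ^ Module.finrank F V := Module.card_eq_pow_finrank
  have hcard : Fintype.card V = 1 + Fintype.card Fˣ * Fintype.card (Projectivization F V) := by
    rw [← Fintype.card_congr (Stmt18Aux.e F V)]
    simp [Fintype.card_sum, Fintype.card_prod]
  have hk : Fintype.card Fˣ = Fintype.card F - 1 := Fintype.card_units F
  have hm1 : 1 ≤ Fintype.card (Projectivization F V) := by
    by_contra h
    have h0 : Fintype.card (Projectivization F V) = 0 := by omega
    rw [h0] at hcard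
    have h4 : 4 ≤ Fintype.card V := by
      rw [hN]
      calc 4 = 2 ^ 2 := rfl
        _ ≤ Fintype.card F ^ 2 := Nat.pow_le_pow_left hq2 2
        _ ≤ Fintype.card F ^ Module.finrank F V := Nat.pow_le_pow_right (by omega) hn
    omega
  have hdiv : (Fintype.card F ^ Module.finrank F V - 1) / (Fintype.card F - 1)
      = Fintype.card (Projectivization F V) := by
    rw [← hN]
    have h2 : Fintype.card V - 1
        = (Fintype.card F - 1) * Fintype.card (Projectivization F V) := by
      rw [hcard, hk]
      simp
    rw [h2, Nat.mul_div_cancel_left _ (by omega)]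
  have hRc : ((Fintype.card F : ℝ) ^ Module.finrank F V - 1)
      = (Fintype.card Fˣ : ℝ) * (Fintype.card (Projectivization F V) : ℝ) := by
    have h3 : Fintype.card F ^ Module.finrank F V
        = 1 + Fintype.card Fˣ * Fintype.card (Projectivization F V) := by rw [← hN]; exact hcard
    have h4 := congrArg (fun t : ℕ => (t : ℝ)) h3
    push_cast at h4
    linarith
  have hre := Stmt18Aux.reindex_eq (F := F) (V := V)
  have hcp : (Matrix.of fun a b : V => ((depGraph F V).dist a b : ℝ)).charpoly
      = (Stmt18Aux.Mfull F V).charpoly := by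
    rw [← hre]
    exact (Matrix.charpoly_reindex _ _).symm
  rw [hcp]
  simp only [hdiv, hRc]
  apply Polynomial.eq_of_infinite_eval_eq
  have hbad : ({0, -1, -(Fintype.card F : ℝ)}ᶜ : Set ℝ).Infinite :=
    Set.Finite.infinite_compl
      (((Set.finite_singleton _).insert _).insert _)
  refine Set.Infinite.mono ?_ hbad
  intro x hx
  simp only [Set.mem_compl_iff, Set.mem_insert_iff, Set.mem_singleton_iff, not_or] at hx
  obtain ⟨hx0, hx1, hxq⟩ := hx
  simp only [Set.mem_setOf_eq]
  rw [Stmt18Aux.eval_charpoly,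
    Stmt18Aux.det_key (F := F) (V := V) hq2 hm1 x hx0
      (by intro h; exact hx1 (by linarith)) (by intro h; exact hxq (by linarith))]
  simp [Polynomial.eval_mul, Polynomial.eval_pow, Polynomial.eval_add, Polynomial.eval_sub,
    Polynomial.eval_C, Polynomial.eval_X]
end
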